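/- Let M be a matroid on a finite ground set E and let B₁ ≠ B₂ be bases of M. The segment with endpoints χ_{B₁} and χ_{B₂} is an edge (a face of dimension 1) of the base polytope P_M if and only if |B₁ Δ B₂| = 2. In particular, every edge of P_M is parallel to a difference e_i − e_j of two standard unit vectors, and the 1-skeleton of P_M is the basis graph of M. -/

import Mathlib

open Set

/-- The base polytope of a matroid on the ground type `α`: the convex hull in `ℝ^α` of the
characteristic vectors of the bases. -/
noncomputable def basePolytope {α : Type*} (M : Matroid α) : Set (α → ℝ) :=
  convexHull ℝ {x | ∃ B, M.IsBase B ∧ x = B.indicator fun _ => (1 : ℝ)}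

section Aux

open scoped Classical

variable {α : Type} [Fintype α] [DecidableEq α]

/-- characteristic vector -/
noncomputable def bpInd (B : Set α) : α → ℝ := B.indicator fun _ => 1

lemma bpInd_apply (B : Set α) (g : α) : bpInd B g = if g ∈ B then 1 else 0 := by
  simp [bpInd, Set.indicator_apply]

lemma bpInd_inj : Function.Injective (bpInd (α := α)) := by
  intro A B h
  ext g
  have h2 := congrFun h g
  rw [bpInd_apply, bpInd_apply] at h2
  by_cases hA : g ∈ A <;> by_cases hB : g ∈ B <;>
    simp only [hA, hB, if_true, if_false] at h2 ⊢ <;> norm_num at h2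

/-- the linear functional with weight vector `w` -/
noncomputable def bpEll (w : α → ℝ) : (α → ℝ) →L[ℝ] ℝ :=
  LinearMap.toContinuousLinearMap (∑ i, w i • LinearMap.proj i)

lemma bpEll_apply (w x : α → ℝ) : bpEll w x = ∑ i, w i * x i := by
  simp [bpEll, LinearMap.sum_apply]

lemma bpEll_single (w : α → ℝ) (j : α) : bpEll w (Pi.single j 1) = w j := by
  rw [bpEll_apply]
  rw [Finset.sum_eq_single j] <;> simp_all [Pi.single_apply]

lemma bpEll_add (u v x : α → ℝ) : bpEll (u + v) x = bpEll u x + bpEll v x := by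
  simp only [bpEll_apply, Pi.add_apply, add_mul, Finset.sum_add_distrib]

lemma bpEll_ind_ind (A B : Set α) : bpEll (bpInd A) (bpInd B) = ((A ∩ B).ncard : ℝ) := by
  rw [bpEll_apply]
  calc ∑ i, bpInd A i * bpInd B i = ∑ i, if i ∈ (A ∩ B).toFinset then (1:ℝ) else 0 := by
        refine Finset.sum_congr rfl fun i _ => ?_
        rw [bpInd_apply, bpInd_apply]
        by_cases hA : i ∈ A <;> by_cases hB : i ∈ B <;>
          simp [hA, hB, Set.mem_toFinset]
    _ = (((A ∩ B).toFinset.card : ℕ) : ℝ) := by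
        rw [Finset.sum_ite_mem, Finset.univ_inter, Finset.sum_const, nsmul_eq_mul, mul_one]
    _ = ((A ∩ B).ncard : ℝ) := by rw [Set.ncard_eq_toFinset_card']

lemma bpInd_exchange {B : Set α} {e f : α} (he : e ∉ B) (hf : f ∈ B) :
    bpInd (insert e (B \ {f})) = bpInd B + Pi.single e 1 - Pi.single f 1 := by
  funext g
  simp only [Pi.sub_apply, Pi.add_apply, bpInd_apply, Pi.single_apply]
  by_cases h1 : g = e <;> by_cases h2 : g = f <;>
    subst_vars <;> simp_all [Set.mem_insert_iff, Set.mem_diff]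

lemma bpInd_sub_of_diffs {B₃ B₂ : Set α} {i j : α} (h1 : B₃ \ B₂ = {i}) (h2 : B₂ \ B₃ = {j}) :
    bpInd B₃ - bpInd B₂ = Pi.single i 1 - Pi.single j 1 := by
  have hi' : i ∈ B₃ \ B₂ := by rw [h1]; exact Set.mem_singleton i
  have hj' : j ∈ B₂ \ B₃ := by rw [h2]; exact Set.mem_singleton j
  have hi3 : i ∈ B₃ := hi'.1
  have hi2 : i ∉ B₂ := hi'.2
  have hj2 : j ∈ B₂ := hj'.1
  have hj3 : j ∉ B₃ := hj'.2
  funext g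
  simp only [Pi.sub_apply, bpInd_apply, Pi.single_apply]
  by_cases h3 : g ∈ B₃ <;> by_cases h4 : g ∈ B₂
  · have hgi : g ≠ i := fun h => hi2 (h ▸ h4)
    have hgj : g ≠ j := fun h => hj3 (h ▸ h3)
    simp [h3, h4, hgi, hgj]
  · have hgi : g = i := by
      have : g ∈ B₃ \ B₂ := ⟨h3, h4⟩
      rwa [h1, Set.mem_singleton_iff] at this
    have hgj : g ≠ j := fun h => h4 (h ▸ hj2)
    subst hgi
    simp [hi3, hi2, hgj]
  · have hgj : g = j := by
      have : g ∈ B₂ \ B₃ := ⟨h4, h3⟩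
      rwa [h2, Set.mem_singleton_iff] at this
    have hgi : g ≠ i := fun h => h3 (h ▸ hi3)
    subst hgj
    simp [hj2, hj3, hgi]
  · have hgi : g ≠ i := fun h => h3 (h ▸ hi3)
    have hgj : g ≠ j := fun h => h4 (h ▸ hj2)
    simp [h3, h4, hgi, hgj]

lemma bp_hull_le {S : Set (α → ℝ)} {L : (α → ℝ) →L[ℝ] ℝ} {m : ℝ}
    (hub : ∀ s ∈ S, L s ≤ m) {x : α → ℝ} (hx : x ∈ convexHull ℝ S) : L x ≤ m :=
  convexHull_min (fun s hs => hub s hs) (convex_halfSpace_le (L.toLinearMap.isLinear) m) hx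

lemma bp_mem_hull_argmax {S : Set (α → ℝ)} {L : (α → ℝ) →L[ℝ] ℝ} {m : ℝ}
    (hub : ∀ s ∈ S, L s ≤ m) {x : α → ℝ} (hx : x ∈ convexHull ℝ S) (hm : L x = m) :
    x ∈ convexHull ℝ {s ∈ S | L s = m} := by
  rw [convexHull_eq] at hx
  obtain ⟨I, t, w, z, hw0, hw1, hzS, hcm⟩ := hx
  rw [Finset.centerMass_eq_of_sum_1 _ _ hw1] at hcm
  have hL : ∑ i ∈ t, w i * L (z i) = m := by
    rw [← hm, ← hcm, map_sum]
    simp [map_smul]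
  have hle : ∀ i ∈ t, w i * L (z i) ≤ w i * m := fun i hi =>
    mul_le_mul_of_nonneg_left (hub _ (hzS i hi)) (hw0 i hi)
  have hsum : ∑ i ∈ t, w i * L (z i) = ∑ i ∈ t, w i * m := by
    rw [hL, ← Finset.sum_mul, hw1, one_mul]
  have heq := (Finset.sum_eq_sum_iff_of_le hle).1 hsum
  set t' := t.filter (fun i => w i ≠ 0) with ht'
  have hsub : t' ⊆ t := Finset.filter_subset _ _
  have hw1' : ∑ i ∈ t', w i = 1 := by
    rw [ht', Finset.sum_filter_ne_zero, hw1]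
  have hx' : x = ∑ i ∈ t', w i • z i := by
    rw [← hcm]
    refine (Finset.sum_filter_of_ne fun i _ h => ?_).symm
    intro h0; exact h (by rw [h0, zero_smul])
  rw [hx', ← Finset.centerMass_eq_of_sum_1 _ _ hw1']
  refine Finset.centerMass_mem_convexHull _ (fun i hi => hw0 i (hsub hi)) (by rw [hw1']; norm_num)
    (fun i hi => ?_)
  have hwne : w i ≠ 0 := (Finset.mem_filter.1 hi).2
  have hiz : L (z i) = m := mul_left_cancel₀ hwne (heq i (hsub hi))
  exact ⟨hzS i (hsub hi), hiz⟩

lemma bp_exposed_face_eq {S : Set (α → ℝ)} {L : (α → ℝ) →L[ℝ] ℝ} {m : ℝ}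
    (hub : ∀ s ∈ S, L s ≤ m) (hex : ∃ s ∈ S, L s = m) :
    {x ∈ convexHull ℝ S | ∀ y ∈ convexHull ℝ S, L y ≤ L x} = convexHull ℝ {s ∈ S | L s = m} := by
  obtain ⟨s₀, hs₀S, hs₀⟩ := hex
  ext x
  constructor
  · rintro ⟨hxP, hxmax⟩
    have hxm : L x = m :=
      le_antisymm (bp_hull_le hub hxP) (hs₀ ▸ hxmax s₀ (subset_convexHull ℝ S hs₀S))
    exact bp_mem_hull_argmax hub hxP hxm
  · intro hx
    have hsub : {s ∈ S | L s = m} ⊆ S := sep_subset _ _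
    refine ⟨convexHull_mono hsub hx, ?_⟩
    have h1 : L x ≤ m := bp_hull_le (fun s hs => hs.2.le) hx
    have h2 : (-L) x ≤ -m := bp_hull_le (fun s hs => by
      simp only [ContinuousLinearMap.neg_apply, hs.2, le_refl]) hx
    rw [ContinuousLinearMap.neg_apply, neg_le_neg_iff] at h2
    have hxm : L x = m := le_antisymm h1 h2
    intro y hy
    rw [hxm]
    exact bp_hull_le hub hy

lemma bp_base_diff_ncard_comm {M : Matroid α} {B₁ B₂ : Set α} (h1 : M.IsBase B₁)
    (h2 : M.IsBase B₂) : (B₁ \ B₂).ncard = (B₂ \ B₁).ncard := by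
  rw [Set.ncard_def, Set.ncard_def, h1.encard_diff_comm h2]

lemma bp_base_diff_nonempty {M : Matroid α} {B₁ B₂ : Set α} (h1 : M.IsBase B₁)
    (h2 : M.IsBase B₂) (hne : B₁ ≠ B₂) : (B₁ \ B₂).Nonempty := by
  rw [Set.diff_nonempty]
  intro hsub
  exact hne (h1.eq_of_subset_isBase h2 hsub)

lemma bp_inter_ncard_lt {M : Matroid α} {A B : Set α} (hA : M.IsBase A) (hB : M.IsBase B)
    (hne : A ≠ B) : (A ∩ B).ncard < A.ncard := by
  have hle : (A ∩ B).ncard ≤ B.ncard := Set.ncard_le_ncard inter_subset_right (Set.toFinite B)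
  have hBA : B.ncard = A.ncard := hB.ncard_eq_ncard_of_isBase hA
  rcases lt_or_eq_of_le hle with h | h
  · omega
  · exfalso
    have : A ∩ B = B := Set.eq_of_subset_of_ncard_le inter_subset_right h.ge (Set.toFinite B)
    exact hne ((hB.eq_of_subset_isBase hA (this ▸ inter_subset_left)).symm)

lemma bp_exists_adjacent_max {M : Matroid α} {L : (α → ℝ) →L[ℝ] ℝ} {B₁ B₂ : Set α}
    (hB₁ : M.IsBase B₁) (hB₂ : M.IsBase B₂) (hne : B₁ ≠ B₂)
    (hmax : ∀ B, M.IsBase B → L (bpInd B) ≤ L (bpInd B₂)) (h1 : L (bpInd B₁) = L (bpInd B₂)) :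
    ∃ B₃, M.IsBase B₃ ∧ B₃ ≠ B₂ ∧ L (bpInd B₃) = L (bpInd B₂) ∧ (B₃ \ B₂).ncard = 1 := by
  set T : Set (Set α) := {B | M.IsBase B ∧ B ≠ B₂ ∧ L (bpInd B) = L (bpInd B₂)} with hT
  have hTne : T.Nonempty := ⟨B₁, hB₁, hne, h1⟩
  obtain ⟨B₃, hB₃T, hmin⟩ := Set.exists_min_image T (fun B => (B \ B₂).ncard) (Set.toFinite T) hTne
  obtain ⟨hB₃, hne₃, heq₃⟩ := hB₃T
  refine ⟨B₃, hB₃, hne₃, heq₃, ?_⟩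
  have hpos : (B₃ \ B₂).Nonempty := bp_base_diff_nonempty hB₃ hB₂ hne₃
  by_contra hn1
  have h0 : (B₃ \ B₂).ncard ≠ 0 := by
    rw [Ne, Set.ncard_eq_zero]
    exact Set.nonempty_iff_ne_empty.1 hpos
  have hge2 : 2 ≤ (B₃ \ B₂).ncard := by omega
  have h23 : (B₂ \ B₃).Nonempty := by
    rw [← Set.ncard_pos]
    rw [← bp_base_diff_ncard_comm hB₃ hB₂]
    omega
  obtain ⟨f₀, hf₀, hf₀min⟩ := Set.exists_min_image (B₂ \ B₃)
    (fun f => L (Pi.single f 1)) (Set.toFinite _) h23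
  obtain ⟨e', he', hB₅⟩ := hB₂.exchange hB₃ hf₀
  set B₅ := insert e' (B₂ \ {f₀}) with hB₅def
  have hind₅ : bpInd B₅ = bpInd B₂ + Pi.single e' 1 - Pi.single f₀ 1 :=
    bpInd_exchange he'.2 hf₀.1
  have hL₅ : L (bpInd B₅) = L (bpInd B₂) + L (Pi.single e' 1) - L (Pi.single f₀ 1) := by
    rw [hind₅]; simp
  have hd₅ : (B₅ \ B₂).ncard = 1 := by
    have hset : B₅ \ B₂ = {e'} := by
      rw [hB₅def]
      ext g
      simp only [Set.mem_diff, Set.mem_insert_iff, Set.mem_singleton_iff]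
      constructor
      · rintro ⟨hg | ⟨hg, _⟩, hg2⟩
        · exact hg
        · exact absurd hg hg2
      · rintro rfl; exact ⟨Or.inl rfl, he'.2⟩
    rw [hset, Set.ncard_singleton]
  have hne₅ : B₅ ≠ B₂ := by
    intro h
    rw [h] at hd₅
    simp at hd₅
  have hlt₅ : L (bpInd B₅) < L (bpInd B₂) := by
    rcases lt_or_eq_of_le (hmax _ hB₅) with h | h
    · exact h
    · exfalso
      have := hmin B₅ ⟨hB₅, hne₅, h⟩
      omega
  have hwlt : L (Pi.single e' 1) < L (Pi.single f₀ 1) := by linarith [hL₅]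
  obtain ⟨f₁, hf₁, hB₆⟩ := hB₃.exchange hB₂ he'
  set B₆ := insert f₁ (B₃ \ {e'}) with hB₆def
  have hind₆ : bpInd B₆ = bpInd B₃ + Pi.single f₁ 1 - Pi.single e' 1 :=
    bpInd_exchange hf₁.2 he'.1
  have hL₆ : L (bpInd B₆) = L (bpInd B₃) + L (Pi.single f₁ 1) - L (Pi.single e' 1) := by
    rw [hind₆]; simp
  have hd₆ : B₆ \ B₂ = (B₃ \ B₂) \ {e'} := by
    rw [hB₆def]
    ext g
    simp only [Set.mem_diff, Set.mem_insert_iff, Set.mem_singleton_iff]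
    constructor
    · rintro ⟨hg | ⟨hg, hg'⟩, hg2⟩
      · exact absurd (hg ▸ hf₁.1) hg2
      · exact ⟨⟨hg, hg2⟩, hg'⟩
    · rintro ⟨⟨hg, hg2⟩, hg'⟩
      exact ⟨Or.inr ⟨hg, hg'⟩, hg2⟩
  have hd₆card : (B₆ \ B₂).ncard = (B₃ \ B₂).ncard - 1 := by
    rw [hd₆, ← Set.ncard_diff_singleton_of_mem he']
  have hne₆ : B₆ ≠ B₂ := by
    intro h
    rw [h] at hd₆card
    simp only [Set.diff_self, Set.ncard_empty] at hd₆card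
    omega
  have hlt₆ : L (bpInd B₆) < L (bpInd B₂) := by
    rcases lt_or_eq_of_le (hmax _ hB₆) with h | h
    · exact h
    · exfalso
      have := hmin B₆ ⟨hB₆, hne₆, h⟩
      omega
  have h1' : L (Pi.single f₁ 1) < L (Pi.single e' 1) := by
    rw [hL₆, heq₃] at hlt₆; linarith
  have h2' : L (Pi.single f₀ 1) ≤ L (Pi.single f₁ 1) := hf₀min f₁ hf₁
  linarith

lemma bp_vectorSpan_segment (x y : α → ℝ) :
    vectorSpan ℝ (segment ℝ x y) = Submodule.span ℝ {x - y} := by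
  rw [← convexHull_pair, ← direction_affineSpan, affineSpan_convexHull, direction_affineSpan,
    vectorSpan_pair, vsub_eq_sub]

end Aux

/-- Edges of the base polytope: for distinct bases `B₁, B₂`, the segment between their
characteristic vectors is an edge (a 1-dimensional face) of `P_M` if and only if
`|B₁ Δ B₂| = 2`. In particular every edge of `P_M` is parallel to a difference
`e_i - e_j` of standard unit vectors, and the 1-skeleton of `P_M` is the basis graph
(its vertices being exactly the characteristic vectors of the bases). -/
theorem basePolytope_edges {α : Type} [Fintype α] [DecidableEq α]
    (M : Matroid α) (hE : M.E = Set.univ) :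
    (∀ B₁ B₂ : Set α, M.IsBase B₁ → M.IsBase B₂ → B₁ ≠ B₂ →
      ((IsExposed ℝ (basePolytope M)
          (segment ℝ (B₁.indicator fun _ => (1 : ℝ)) (B₂.indicator fun _ => (1 : ℝ))) ∧
        Module.finrank ℝ (vectorSpan ℝ
          (segment ℝ (B₁.indicator fun _ => (1 : ℝ)) (B₂.indicator fun _ => (1 : ℝ)))) = 1) ↔
      (symmDiff B₁ B₂).ncard = 2)) ∧
    (∀ F : Set (α → ℝ), IsExposed ℝ (basePolytope M) F →
      Module.finrank ℝ (vectorSpan ℝ F) = 1 →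
      ∃ i j : α, i ≠ j ∧
        vectorSpan ℝ F = Submodule.span ℝ {Pi.single i (1 : ℝ) - Pi.single j (1 : ℝ)}) ∧
    Set.extremePoints ℝ (basePolytope M) =
      {x | ∃ B, M.IsBase B ∧ x = B.indicator fun _ => (1 : ℝ)} := by
  classical
  set S : Set (α → ℝ) := {x | ∃ B, M.IsBase B ∧ x = B.indicator fun _ => (1 : ℝ)} with hS
  have hSind : S = {x | ∃ B, M.IsBase B ∧ x = bpInd B} := rfl
  have hP : basePolytope M = convexHull ℝ S := rfl
  have hindeq : ∀ B : Set α, (B.indicator fun _ => (1 : ℝ)) = bpInd B := fun _ => rfl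
  have hmemS : ∀ {B : Set α}, M.IsBase B → bpInd B ∈ S := fun {B} hB => ⟨B, hB, rfl⟩
  have hmemP : ∀ {B : Set α}, M.IsBase B → bpInd B ∈ basePolytope M := fun {B} hB =>
    hP ▸ subset_convexHull ℝ S (hmemS hB)
  -- the symmetric difference decomposition
  have hsd : ∀ {B₁ B₂ : Set α}, (symmDiff B₁ B₂).ncard = (B₁ \ B₂).ncard + (B₂ \ B₁).ncard := by
    intro B₁ B₂
    rw [Set.symmDiff_def, Set.ncard_union_eq disjoint_sdiff_sdiff]
  refine ⟨?_, ?_, ?_⟩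
  · -- part 1
    intro B₁ B₂ hB₁ hB₂ hne
    rw [hindeq, hindeq]
    constructor
    · -- exposed edge → symm diff 2
      rintro ⟨hexp, -⟩
      obtain ⟨L, hFeq⟩ := hexp ⟨bpInd B₁, left_mem_segment ℝ _ _⟩
      have hx₁ : bpInd B₁ ∈ {x ∈ basePolytope M | ∀ y ∈ basePolytope M, L y ≤ L x} := by
        rw [← hFeq]; exact left_mem_segment ℝ _ _
      have hx₂ : bpInd B₂ ∈ {x ∈ basePolytope M | ∀ y ∈ basePolytope M, L y ≤ L x} := by
        rw [← hFeq]; exact right_mem_segment ℝ _ _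
      have hL12 : L (bpInd B₁) = L (bpInd B₂) :=
        le_antisymm (hx₂.2 _ hx₁.1) (hx₁.2 _ hx₂.1)
      have hmax : ∀ B, M.IsBase B → L (bpInd B) ≤ L (bpInd B₂) := fun B hB =>
        hx₂.2 _ (hmemP hB)
      by_contra hncard
      have ha1 : 1 ≤ (B₁ \ B₂).ncard := by
        rw [Nat.one_le_iff_ne_zero, Ne, Set.ncard_eq_zero]
        exact Set.nonempty_iff_ne_empty.1 (bp_base_diff_nonempty hB₁ hB₂ hne)
      have hcomm : (B₁ \ B₂).ncard = (B₂ \ B₁).ncard := bp_base_diff_ncard_comm hB₁ hB₂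
      have ha2 : 2 ≤ (B₁ \ B₂).ncard := by
        have := @hsd B₁ B₂
        omega
      obtain ⟨B₃, hB₃, hne₃, hL₃, hd₃⟩ := bp_exists_adjacent_max hB₁ hB₂ hne hmax hL12
      have hne₁ : B₃ ≠ B₁ := by
        intro h
        rw [h] at hd₃
        omega
      have hx₃ : bpInd B₃ ∈ segment ℝ (bpInd B₁) (bpInd B₂) := by
        rw [hFeq]
        exact ⟨hmemP hB₃, fun y hy => hL₃ ▸ hx₂.2 y hy⟩
      obtain ⟨a, b, ha, hb, hab, hsum⟩ := hx₃
      obtain ⟨g, hg⟩ := Set.ncard_eq_one.1 hd₃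
      have hgmem : g ∈ B₃ \ B₂ := by rw [hg]; exact Set.mem_singleton g
      have hcoord := congrFun hsum g
      simp only [Pi.add_apply, Pi.smul_apply, smul_eq_mul] at hcoord
      rw [bpInd_apply, bpInd_apply, bpInd_apply] at hcoord
      rw [if_pos hgmem.1, if_neg hgmem.2] at hcoord
      by_cases hgB₁ : g ∈ B₁
      · rw [if_pos hgB₁] at hcoord
        have hA1 : a = 1 := by linarith
        have hB0 : b = 0 := by linarith
        rw [hA1, hB0, one_smul, zero_smul, add_zero] at hsum
        exact hne₁ (bpInd_inj hsum.symm)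
      · rw [if_neg hgB₁] at hcoord
        norm_num at hcoord
    · -- symm diff 2 → exposed edge
      intro h2
      set L := bpEll (bpInd B₁ + bpInd B₂) with hLdef
      have hval : ∀ B : Set α, L (bpInd B) = ((B₁ ∩ B).ncard + (B₂ ∩ B).ncard : ℕ) := by
        intro B
        rw [hLdef, bpEll_add, bpEll_ind_ind, bpEll_ind_ind]
        push_cast
        ring
      have hd12 : (B₁ \ B₂).ncard = 1 := by
        have hcomm : (B₁ \ B₂).ncard = (B₂ \ B₁).ncard := bp_base_diff_ncard_comm hB₁ hB₂
        have := @hsd B₁ B₂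
        omega
      have hk : (B₁ ∩ B₂).ncard + 1 = B₁.ncard := by
        have := Set.ncard_inter_add_ncard_diff_eq_ncard B₁ B₂ (Set.toFinite B₁)
        omega
      have hr2 : B₂.ncard = B₁.ncard := hB₂.ncard_eq_ncard_of_isBase hB₁
      -- the value at B₁ (and B₂)
      have hvB₁ : (B₁ ∩ B₁).ncard + (B₂ ∩ B₁).ncard = B₁.ncard + (B₁ ∩ B₂).ncard := by
        rw [Set.inter_self, Set.inter_comm B₂ B₁]
      have hvB₂ : (B₁ ∩ B₂).ncard + (B₂ ∩ B₂).ncard = B₁.ncard + (B₁ ∩ B₂).ncard := by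
        rw [Set.inter_self, hr2]
        omega
      have hub : ∀ s ∈ S, L s ≤ L (bpInd B₁) := by
        rintro s ⟨B, hB, rfl⟩
        rw [hindeq, hval, hval, hvB₁]
        by_cases hBB₁ : B = B₁
        · subst hBB₁; rw [hvB₁]
        · by_cases hBB₂ : B = B₂
          · subst hBB₂; rw [hvB₂]
          · have h1 : (B₁ ∩ B).ncard < B₁.ncard := bp_inter_ncard_lt hB₁ hB (Ne.symm hBB₁)
            have h2' : (B₂ ∩ B).ncard < B₂.ncard := bp_inter_ncard_lt hB₂ hB (Ne.symm hBB₂)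
            have : (B₁ ∩ B).ncard + (B₂ ∩ B).ncard ≤ B₁.ncard + (B₁ ∩ B₂).ncard := by omega
            exact_mod_cast this
      have hargmax : {s ∈ S | L s = L (bpInd B₁)} = {bpInd B₁, bpInd B₂} := by
        ext s
        constructor
        · rintro ⟨⟨B, hB, rfl⟩, hLs⟩
          rw [hindeq] at hLs ⊢
          rw [hval, hval, hvB₁] at hLs
          have hLs' : (B₁ ∩ B).ncard + (B₂ ∩ B).ncard = B₁.ncard + (B₁ ∩ B₂).ncard := by
            exact_mod_cast hLs
          by_cases hBB₁ : B = B₁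
          · exact Set.mem_insert_iff.2 (Or.inl (by rw [hBB₁]))
          · by_cases hBB₂ : B = B₂
            · exact Set.mem_insert_iff.2 (Or.inr (Set.mem_singleton_iff.2 (by rw [hBB₂])))
            · exfalso
              have h1 : (B₁ ∩ B).ncard < B₁.ncard := bp_inter_ncard_lt hB₁ hB (Ne.symm hBB₁)
              have h2' : (B₂ ∩ B).ncard < B₂.ncard := bp_inter_ncard_lt hB₂ hB (Ne.symm hBB₂)
              omega
        · rintro (rfl | rfl)
          · exact ⟨hmemS hB₁, rfl⟩
          · refine ⟨hmemS hB₂, ?_⟩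
            rw [hval, hval, hvB₁, hvB₂]
      have hface : {x ∈ convexHull ℝ S | ∀ y ∈ convexHull ℝ S, L y ≤ L x} =
          segment ℝ (bpInd B₁) (bpInd B₂) := by
        rw [bp_exposed_face_eq hub ⟨bpInd B₁, hmemS hB₁, rfl⟩, hargmax, convexHull_pair]
      constructor
      · intro _
        exact ⟨L, by rw [hP, hface]⟩
      · rw [bp_vectorSpan_segment]
        refine finrank_span_singleton ?_
        rw [sub_ne_zero]
        exact fun h => hne (bpInd_inj h)
  · -- part 2
    intro F hexp hrank
    have hFne : F.Nonempty := by
      rcases Set.eq_empty_or_nonempty F with h | h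
      · rw [h, vectorSpan_empty, finrank_bot] at hrank
        omega
      · exact h
    obtain ⟨L, hFeq⟩ := hexp hFne
    obtain ⟨x₀, hx₀F⟩ := hFne
    have hx₀ := hFeq ▸ hx₀F
    obtain ⟨hx₀P, hx₀max⟩ := hx₀
    have hSne : S.Nonempty := by
      by_contra h
      rw [Set.not_nonempty_iff_eq_empty] at h
      rw [hP, h, convexHull_empty] at hx₀P
      exact hx₀P
    obtain ⟨s₀, B₀, hB₀, rfl⟩ := hSne
    have hBne : {B : Set α | M.IsBase B}.Nonempty := ⟨B₀, hB₀⟩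
    obtain ⟨Bm, hBm, hBmmax⟩ := Set.exists_max_image {B : Set α | M.IsBase B}
      (fun B => L (bpInd B)) (Set.toFinite _) hBne
    have hub : ∀ s ∈ S, L s ≤ L (bpInd Bm) := by
      rintro s ⟨B, hB, rfl⟩
      exact hBmmax B hB
    have hface : F = convexHull ℝ {s ∈ S | L s = L (bpInd Bm)} := by
      rw [hFeq, hP]
      exact bp_exposed_face_eq hub ⟨bpInd Bm, hmemS hBm, rfl⟩
    -- there must be two distinct optimal bases
    have hex2 : ∃ B', M.IsBase B' ∧ L (bpInd B') = L (bpInd Bm) ∧ B' ≠ Bm := by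
      by_contra h
      push_neg at h
      have hsingle : {s ∈ S | L s = L (bpInd Bm)} = {bpInd Bm} := by
        ext s
        constructor
        · rintro ⟨⟨B, hB, rfl⟩, hLs⟩
          rw [hindeq] at hLs ⊢
          by_cases hBB : B = Bm
          · exact Set.mem_singleton_iff.2 (by rw [hBB])
          · exact absurd (h B hB hLs) hBB
        · rintro rfl
          exact ⟨hmemS hBm, rfl⟩
      rw [hsingle, convexHull_singleton] at hface
      rw [hface, vectorSpan_singleton, finrank_bot] at hrank
      omega
    obtain ⟨B', hB', hLB', hneB'⟩ := hex2
    obtain ⟨B₃, hB₃, hne₃, hL₃, hd₃⟩ :=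
      bp_exists_adjacent_max hB' hBm hneB' (fun B hB => hBmmax B hB) hLB'
    have hd₃' : (Bm \ B₃).ncard = 1 := by
      rw [← bp_base_diff_ncard_comm hB₃ hBm] at *
      exact hd₃
    obtain ⟨i, hi⟩ := Set.ncard_eq_one.1 hd₃
    obtain ⟨j, hj⟩ := Set.ncard_eq_one.1 hd₃'
    have hij : i ≠ j := by
      have hi' : i ∈ B₃ \ Bm := by rw [hi]; exact Set.mem_singleton i
      have hj' : j ∈ Bm \ B₃ := by rw [hj]; exact Set.mem_singleton j
      intro h
      exact hi'.2 (h ▸ hj'.1)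
    refine ⟨i, j, hij, ?_⟩
    have hvdiff : bpInd B₃ - bpInd Bm = Pi.single i 1 - Pi.single j 1 :=
      bpInd_sub_of_diffs hi hj
    have hmemF : ∀ {B : Set α}, M.IsBase B → L (bpInd B) = L (bpInd Bm) → bpInd B ∈ F := by
      intro B hB hLB
      rw [hface]
      exact subset_convexHull ℝ _ ⟨hmemS hB, hLB⟩
    have hv : Pi.single i (1:ℝ) - Pi.single j (1:ℝ) ∈ vectorSpan ℝ F := by
      rw [← hvdiff, ← vsub_eq_sub]
      exact vsub_mem_vectorSpan ℝ (hmemF hB₃ hL₃) (hmemF hBm rfl)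
    have hle : Submodule.span ℝ {Pi.single i (1:ℝ) - Pi.single j (1:ℝ)} ≤ vectorSpan ℝ F := by
      rw [Submodule.span_le, Set.singleton_subset_iff]
      exact hv
    have hvne : Pi.single i (1:ℝ) - Pi.single j (1:ℝ) ≠ (0 : α → ℝ) := by
      intro h
      have := congrFun h i
      simp only [Pi.sub_apply, Pi.single_apply, Pi.zero_apply, if_pos rfl,
        if_neg hij] at this
      norm_num at this
    have hfr : Module.finrank ℝ
        (Submodule.span ℝ ({Pi.single i (1:ℝ) - Pi.single j (1:ℝ)} : Set (α → ℝ))) = 1 :=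
      finrank_span_singleton hvne
    exact (Submodule.eq_of_le_of_finrank_le hle (by rw [hrank, hfr])).symm
  · -- part 3
    apply Set.Subset.antisymm
    · rw [hP]
      exact extremePoints_convexHull_subset
    · rintro x ⟨B, hB, rfl⟩
      rw [hindeq]
      set L := bpEll (bpInd B) with hLdef
      have hub : ∀ s ∈ S, L s ≤ L (bpInd B) := by
        rintro s ⟨B', hB', rfl⟩
        rw [hindeq, hLdef, bpEll_ind_ind, bpEll_ind_ind, Set.inter_self]
        by_cases hBB : B' = B
        · rw [hBB, Set.inter_self]
        · exact_mod_cast (bp_inter_ncard_lt hB hB' (Ne.symm hBB)).le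
      have hargmax : {s ∈ S | L s = L (bpInd B)} = {bpInd B} := by
        ext s
        constructor
        · rintro ⟨⟨B', hB', rfl⟩, hLs⟩
          rw [hindeq] at hLs ⊢
          by_cases hBB : B' = B
          · exact Set.mem_singleton_iff.2 (by rw [hBB])
          · exfalso
            rw [hLdef, bpEll_ind_ind, bpEll_ind_ind, Set.inter_self] at hLs
            have h1 : (B ∩ B').ncard < B.ncard := bp_inter_ncard_lt hB hB' (Ne.symm hBB)
            have : (B ∩ B').ncard = B.ncard := by exact_mod_cast hLs
            omega
        · rintro rfl
          exact ⟨hmemS hB, rfl⟩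
      have hface : {x ∈ convexHull ℝ S | ∀ y ∈ convexHull ℝ S, L y ≤ L x} = {bpInd B} := by
        rw [bp_exposed_face_eq hub ⟨bpInd B, hmemS hB, rfl⟩, hargmax, convexHull_singleton]
      have hexp : IsExposed ℝ (basePolytope M) {bpInd B} := fun _ =>
        ⟨L, by rw [hP, hface]⟩
      exact (isExtreme_singleton).1 hexp.isExtreme
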